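/- Let H be the graph constructed from G and ℓ. For a vertex set R ⊆ V ∪ X ∪ Y, define proj⁻¹(R) = R ∪ { a_{v,j} ∈ A : v ∈ R ∩ V, 1 ≤ j ≤ d_v } ∪ { b_{v,j} ∈ B : v ∈ R ∩ V, 1 ≤ j ≤ d_v }. If proj⁻¹(R) is a target set for H, then R is a target set for H. -/

import Mathlib

namespace TSS

variable {V : Type*}

/-- The set of active vertices after `i` steps of the activation process started from `S`. -/
def activeAt (G : SimpleGraph V) (τ : V → ℕ) (S : Set V) : ℕ → Set V
  | 0 => S
  | i + 1 => activeAt G τ S i ∪ { v | τ v ≤ (G.neighborSet v ∩ activeAt G τ S i).ncard }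

/-- The active vertex set `𝒜(S) = ⋃ i, 𝒜ⁱ(S)`. -/
def activeSet (G : SimpleGraph V) (τ : V → ℕ) (S : Set V) : Set V :=
  ⋃ i, activeAt G τ S i

/-- `S` is a target set for `(G, τ)` if it activates every vertex. -/
def IsTargetSet (G : SimpleGraph V) (τ : V → ℕ) (S : Set V) : Prop :=
  activeSet G τ S = Set.univ

/-- Minimum size of a target set. -/
noncomputable def optTS (G : SimpleGraph V) (τ : V → ℕ) : ℕ :=
  sInf { m | ∃ S : Set V, IsTargetSet G τ S ∧ S.ncard = m }

/-- A reconfiguration sequence `Sfam 0 = X, …, Sfam T = Y` of target sets where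
consecutive sets differ in exactly one vertex. -/
structure IsReconfSeq (G : SimpleGraph V) (τ : V → ℕ) (X Y : Set V) (T : ℕ)
    (Sfam : ℕ → Set V) : Prop where
  head : Sfam 0 = X
  last : Sfam T = Y
  target : ∀ t ≤ T, IsTargetSet G τ (Sfam t)
  step : ∀ t < T, (symmDiff (Sfam t) (Sfam (t + 1))).ncard = 1

/-- The size of a reconfiguration sequence: maximum cardinality of any member. -/
noncomputable def seqSize (T : ℕ) (Sfam : ℕ → Set V) : ℕ :=
  (Finset.range (T + 1)).sup fun t => (Sfam t).ncard

/-- `opt_G(X ⇝ Y)`: minimum size over all reconfiguration sequences from `X` to `Y`. -/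
noncomputable def optReconf (G : SimpleGraph V) (τ : V → ℕ) (X Y : Set V) : ℕ :=
  sInf { m | ∃ T Sfam, IsReconfSeq G τ X Y T Sfam ∧ seqSize T Sfam = m }

/-- The four internal vertices of a one-way gadget. -/
inductive GadVert where | t | h | b1 | b2

/-- Index set of the one-way gadgets of the graph `H` built from `G` (with degree
function `d`) and `ℓ`. -/
inductive GadIdx (V : Type*) (ℓ : ℕ) (d : V → ℕ) where
  | vx (v : V) (i : Fin ℓ)
  | xa (i : Fin ℓ) (v : V) (j : Fin (d v))
  | av (v : V) (j : Fin (d v))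
  | vy (v : V) (i : Fin ℓ)
  | yb (i : Fin ℓ) (v : V) (j : Fin (d v))
  | bv (v : V) (j : Fin (d v))

/-- Vertices of the graph `H`: a copy of `V`, the sets `X`, `Y`, `A`, `B`, and the
internal vertices of all one-way gadgets. -/
inductive HVert (V : Type*) (ℓ : ℕ) (d : V → ℕ) where
  | orig (v : V)
  | xx (i : Fin ℓ)
  | yy (i : Fin ℓ)
  | aa (v : V) (j : Fin (d v))
  | bb (v : V) (j : Fin (d v))
  | gad (D : GadIdx V ℓ d) (w : GadVert)

variable {ℓ : ℕ} {d : V → ℕ}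

/-- The tail of a one-way gadget. -/
def gadTail : GadIdx V ℓ d → HVert V ℓ d
  | .vx v _ => .orig v
  | .xa i _ _ => .xx i
  | .av v j => .aa v j
  | .vy v _ => .orig v
  | .yb i _ _ => .yy i
  | .bv v j => .bb v j

/-- The head of a one-way gadget. -/
def gadHead : GadIdx V ℓ d → HVert V ℓ d
  | .vx _ i => .xx i
  | .xa _ v j => .aa v j
  | .av v _ => .orig v
  | .vy _ i => .yy i
  | .yb _ v j => .bb v j
  | .bv v _ => .orig v

/-- Base edge relation of the graph `H`. -/
def HRel (G : SimpleGraph V) (ℓ : ℕ) (d : V → ℕ) : HVert V ℓ d → HVert V ℓ d → Prop :=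
  fun p q =>
    (∃ u v, G.Adj u v ∧ p = .orig u ∧ q = .orig v) ∨
    (∃ D, p = .gad D .t ∧ (q = .gad D .b1 ∨ q = .gad D .b2)) ∨
    (∃ D, p = .gad D .h ∧ (q = .gad D .b1 ∨ q = .gad D .b2)) ∨
    (∃ D, p = gadTail D ∧ q = .gad D .t) ∨
    (∃ D, p = gadHead D ∧ q = .gad D .h)

/-- The graph `H` constructed from `G` (with degree function `d`) and `ℓ`. -/
def graphH (G : SimpleGraph V) (ℓ : ℕ) (d : V → ℕ) : SimpleGraph (HVert V ℓ d) :=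
  SimpleGraph.fromRel (HRel G ℓ d)

/-- The threshold function `τ'` of `H`, where `n` is the number of vertices of `G`. -/
def tauH (τ : V → ℕ) (n ℓ : ℕ) (d : V → ℕ) : HVert V ℓ d → ℕ
  | .orig v => τ v
  | .xx _ => n
  | .yy _ => n
  | .aa _ _ => ℓ
  | .bb _ _ => ℓ
  | .gad _ .t => 1
  | .gad _ .b1 => 1
  | .gad _ .b2 => 1
  | .gad _ .h => 2

/-- The vertex set `X = {x₁, …, x_ℓ}` of `H`. -/
def XSet (V : Type*) (ℓ : ℕ) (d : V → ℕ) : Set (HVert V ℓ d) := Set.range HVert.xx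

/-- The vertex set `Y = {y₁, …, y_ℓ}` of `H`. -/
def YSet (V : Type*) (ℓ : ℕ) (d : V → ℕ) : Set (HVert V ℓ d) := Set.range HVert.yy

/-- The copy of `V` inside `V(H)`. -/
def OrigSet (V : Type*) (ℓ : ℕ) (d : V → ℕ) : Set (HVert V ℓ d) := Set.range HVert.orig

/-- The vertex set `A = {a_{v,j}}` of `H`. -/
def ASet (V : Type*) (ℓ : ℕ) (d : V → ℕ) : Set (HVert V ℓ d) :=
  { p | ∃ v j, p = HVert.aa v j }

/-- The vertex set `B = {b_{v,j}}` of `H`. -/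
def BSet (V : Type*) (ℓ : ℕ) (d : V → ℕ) : Set (HVert V ℓ d) :=
  { p | ∃ v j, p = HVert.bb v j }

end TSS

namespace TSS

/-- `proj⁻¹(R)`: add to `R` all vertices `a_{v,j}` and `b_{v,j}` for `v ∈ R ∩ V`. -/
def projInv {V : Type*} (ℓ : ℕ) (d : V → ℕ) (R : Set (HVert V ℓ d)) : Set (HVert V ℓ d) :=
  R ∪ { p | ∃ v j, HVert.orig v ∈ R ∧ p = HVert.aa v j } ∪
    { p | ∃ v j, HVert.orig v ∈ R ∧ p = HVert.bb v j }

end TSS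

namespace TSS
variable {V : Type*} {ℓ : ℕ} {d : V → ℕ}
@[simp] lemma gadTail_ne_gad (D D' : GadIdx V ℓ d) (w : GadVert) : gadTail D ≠ .gad D' w := by
  cases D <;> simp [gadTail]

@[simp] lemma gad_ne_gadTail (D D' : GadIdx V ℓ d) (w : GadVert) : HVert.gad D' w ≠ gadTail D :=
  (gadTail_ne_gad D D' w).symm

@[simp] lemma gadHead_ne_gad (D D' : GadIdx V ℓ d) (w : GadVert) : gadHead D ≠ .gad D' w := by
  cases D <;> simp [gadHead]

@[simp] lemma gad_ne_gadHead (D D' : GadIdx V ℓ d) (w : GadVert) : HVert.gad D' w ≠ gadHead D :=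
  (gadHead_ne_gad D D' w).symm

variable (G : SimpleGraph V)

lemma adj_iff {p q : HVert V ℓ d} :
    (graphH G ℓ d).Adj p q ↔ p ≠ q ∧ (HRel G ℓ d p q ∨ HRel G ℓ d q p) :=
  SimpleGraph.fromRel_adj _ _ _

lemma adj_tail_t (D : GadIdx V ℓ d) : (graphH G ℓ d).Adj (gadTail D) (.gad D .t) :=
  adj_iff G |>.2 ⟨gadTail_ne_gad D D .t, Or.inl (Or.inr (Or.inr (Or.inr (Or.inl ⟨D, rfl, rfl⟩))))⟩

lemma adj_head_h (D : GadIdx V ℓ d) : (graphH G ℓ d).Adj (gadHead D) (.gad D .h) :=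
  adj_iff G |>.2 ⟨gadHead_ne_gad D D .h, Or.inl (Or.inr (Or.inr (Or.inr (Or.inr ⟨D, rfl, rfl⟩))))⟩

lemma adj_t_b1 (D : GadIdx V ℓ d) : (graphH G ℓ d).Adj (.gad D .t) (.gad D .b1) :=
  adj_iff G |>.2 ⟨by simp, Or.inl (Or.inr (Or.inl ⟨D, rfl, Or.inl rfl⟩))⟩

lemma adj_t_b2 (D : GadIdx V ℓ d) : (graphH G ℓ d).Adj (.gad D .t) (.gad D .b2) :=
  adj_iff G |>.2 ⟨by simp, Or.inl (Or.inr (Or.inl ⟨D, rfl, Or.inr rfl⟩))⟩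

lemma adj_h_b1 (D : GadIdx V ℓ d) : (graphH G ℓ d).Adj (.gad D .h) (.gad D .b1) :=
  adj_iff G |>.2 ⟨by simp, Or.inl (Or.inr (Or.inr (Or.inl ⟨D, rfl, Or.inl rfl⟩)))⟩

lemma adj_h_b2 (D : GadIdx V ℓ d) : (graphH G ℓ d).Adj (.gad D .h) (.gad D .b2) :=
  adj_iff G |>.2 ⟨by simp, Or.inl (Or.inr (Or.inr (Or.inl ⟨D, rfl, Or.inr rfl⟩)))⟩

lemma adj_b1_elim {p : HVert V ℓ d} {D : GadIdx V ℓ d}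
    (h : (graphH G ℓ d).Adj p (.gad D .b1)) : p = .gad D .t ∨ p = .gad D .h := by
  rw [adj_iff] at h
  obtain ⟨-, h | h⟩ := h <;>
    simp only [HRel] at h <;>
    rcases h with ⟨u,v,-,h1,h2⟩|⟨D',h1,h2|h2⟩|⟨D',h1,h2|h2⟩|⟨D',h1,h2⟩|⟨D',h1,h2⟩ <;>
    simp_all

lemma adj_b2_elim {p : HVert V ℓ d} {D : GadIdx V ℓ d}
    (h : (graphH G ℓ d).Adj p (.gad D .b2)) : p = .gad D .t ∨ p = .gad D .h := by
  rw [adj_iff] at h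
  obtain ⟨-, h | h⟩ := h <;>
    simp only [HRel] at h <;>
    rcases h with ⟨u,v,-,h1,h2⟩|⟨D',h1,h2|h2⟩|⟨D',h1,h2|h2⟩|⟨D',h1,h2⟩|⟨D',h1,h2⟩ <;>
    simp_all

lemma adj_t_elim {p : HVert V ℓ d} {D : GadIdx V ℓ d}
    (h : (graphH G ℓ d).Adj p (.gad D .t)) :
    p = .gad D .b1 ∨ p = .gad D .b2 ∨ p = gadTail D := by
  rw [adj_iff] at h
  obtain ⟨-, h | h⟩ := h <;>
    simp only [HRel] at h <;>
    rcases h with ⟨u,v,-,h1,h2⟩|⟨D',h1,h2|h2⟩|⟨D',h1,h2|h2⟩|⟨D',h1,h2⟩|⟨D',h1,h2⟩ <;>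
    simp_all

lemma adj_h_elim {p : HVert V ℓ d} {D : GadIdx V ℓ d}
    (h : (graphH G ℓ d).Adj p (.gad D .h)) :
    p = .gad D .b1 ∨ p = .gad D .b2 ∨ p = gadHead D := by
  rw [adj_iff] at h
  obtain ⟨-, h | h⟩ := h <;>
    simp only [HRel] at h <;>
    rcases h with ⟨u,v,-,h1,h2⟩|⟨D',h1,h2|h2⟩|⟨D',h1,h2|h2⟩|⟨D',h1,h2⟩|⟨D',h1,h2⟩ <;>
    simp_all

lemma adj_aa_elim {p : HVert V ℓ d} {v : V} {j : Fin (d v)}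
    (h : (graphH G ℓ d).Adj p (.aa v j)) :
    p = .gad (.av v j) .t ∨ ∃ i, p = .gad (.xa i v j) .h := by
  rw [adj_iff] at h
  obtain ⟨-, h | h⟩ := h <;>
    simp only [HRel] at h <;>
    rcases h with ⟨u,v',-,h1,h2⟩|⟨D',h1,h2|h2⟩|⟨D',h1,h2|h2⟩|⟨D',h1,h2⟩|⟨D',h1,h2⟩ <;>
    (try subst h2) <;> (try cases D') <;> simp_all [gadTail, gadHead] <;>
    (obtain ⟨rfl, h1⟩ := h1; exact h1.symm)

lemma adj_bb_elim {p : HVert V ℓ d} {v : V} {j : Fin (d v)}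
    (h : (graphH G ℓ d).Adj p (.bb v j)) :
    p = .gad (.bv v j) .t ∨ ∃ i, p = .gad (.yb i v j) .h := by
  rw [adj_iff] at h
  obtain ⟨-, h | h⟩ := h <;>
    simp only [HRel] at h <;>
    rcases h with ⟨u,v',-,h1,h2⟩|⟨D',h1,h2|h2⟩|⟨D',h1,h2|h2⟩|⟨D',h1,h2⟩|⟨D',h1,h2⟩ <;>
    (try subst h2) <;> (try cases D') <;> simp_all [gadTail, gadHead] <;>
    (obtain ⟨rfl, h1⟩ := h1; exact h1.symm)
section Act
variable {W : Type*} (G : SimpleGraph W) (τ : W → ℕ) (S : Set W)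

lemma activeAt_mono : Monotone (activeAt G τ S) :=
  monotone_nat_of_le_succ fun _ => Set.subset_union_left

lemma subset_activeSet : S ⊆ activeSet G τ S := fun v hv => Set.mem_iUnion.2 ⟨0, hv⟩

lemma activeAt_subset_activeSet (i : ℕ) : activeAt G τ S i ⊆ activeSet G τ S :=
  Set.subset_iUnion _ i

lemma activeAt_fixed {i : ℕ} (h : activeAt G τ S (i + 1) = activeAt G τ S i) :
    ∀ j, i ≤ j → activeAt G τ S j = activeAt G τ S i := by
  intro j hj
  induction j with
  | zero =>
    have : i = 0 := by omega
    rw [this]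
  | succ k ih =>
    rcases Nat.lt_or_ge i (k+1) with h1 | h1
    · have hk : i ≤ k := by omega
      have := ih hk
      show activeAt G τ S k ∪ _ = _
      rw [this]; exact h
    · have : i = k + 1 := by omega
      rw [this]

variable [Finite W]

lemma exists_activeSet_eq : ∃ i, activeSet G τ S = activeAt G τ S i ∧
    activeAt G τ S (i + 1) = activeAt G τ S i := by
  have hfix : ∃ i, activeAt G τ S (i + 1) = activeAt G τ S i := by
    by_contra hc
    push_neg at hc
    have hss : ∀ i, activeAt G τ S i ⊂ activeAt G τ S (i + 1) := fun i =>
      (Set.ssubset_iff_of_subset (activeAt_mono G τ S (Nat.le_succ i))).2 (by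
        rcases Set.exists_of_ssubset (ssubset_of_ne_of_subset (Ne.symm (hc i)) (activeAt_mono G τ S (Nat.le_succ i))) with ⟨x, hx1, hx2⟩
        exact ⟨x, hx1, hx2⟩)
    have hmono : StrictMono (fun i => (activeAt G τ S i).ncard) := by
      apply strictMono_nat_of_lt_succ
      intro n
      exact Set.ncard_lt_ncard (hss n) (Set.toFinite _)
    have h1 : Nat.card W + 1 ≤ (activeAt G τ S (Nat.card W + 1)).ncard := hmono.le_apply
    have h2 : (activeAt G τ S (Nat.card W + 1)).ncard ≤ Nat.card W := by
      rw [← Set.ncard_univ]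
      exact Set.ncard_le_ncard (Set.subset_univ _) (Set.toFinite _)
    omega
  obtain ⟨i, hi⟩ := hfix
  refine ⟨i, ?_, hi⟩
  apply Set.Subset.antisymm
  · apply Set.iUnion_subset
    intro j
    rcases le_or_gt j i with h | h
    · exact activeAt_mono G τ S h
    · rw [activeAt_fixed G τ S hi j (by omega)]
  · exact activeAt_subset_activeSet G τ S i

lemma mem_activeSet_of_threshold {v : W}
    (h : τ v ≤ (G.neighborSet v ∩ activeSet G τ S).ncard) : v ∈ activeSet G τ S := by
  obtain ⟨i, hi, hfix⟩ := exists_activeSet_eq G τ S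
  rw [hi] at h
  have : v ∈ activeAt G τ S (i + 1) := Set.mem_union_right _ h
  rw [hfix] at this
  exact activeAt_subset_activeSet G τ S i this

lemma mem_activeSet_of_subset {v : W} {T : Set W}
    (hT : T ⊆ G.neighborSet v ∩ activeSet G τ S) (hcard : τ v ≤ T.ncard) :
    v ∈ activeSet G τ S :=
  mem_activeSet_of_threshold G τ S (le_trans hcard (Set.ncard_le_ncard hT (Set.toFinite _)))

lemma mem_activeSet_elim {v : W} (h : v ∈ activeSet G τ S) :
    v ∈ S ∨ τ v ≤ (G.neighborSet v ∩ activeSet G τ S).ncard := by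
  obtain ⟨i, hi⟩ := Set.mem_iUnion.1 h
  induction i with
  | zero => exact Or.inl hi
  | succ k ih =>
    rcases hi with hk | hv
    · exact ih hk
    · refine Or.inr (le_trans hv (Set.ncard_le_ncard ?_ (Set.toFinite _)))
      exact Set.inter_subset_inter_right _ (activeAt_subset_activeSet G τ S k)

end Act

instance : Fintype GadVert := derive_fintype% GadVert

instance instFintypeGadIdx [Fintype V] [DecidableEq V] : Fintype (GadIdx V ℓ d) :=
  derive_fintype% (GadIdx V ℓ d)

instance instFintypeHVert [Fintype V] [DecidableEq V] : Fintype (HVert V ℓ d) :=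
  derive_fintype% (HVert V ℓ d)

instance instFiniteHVert [Finite V] : Finite (HVert V ℓ d) := by
  have := Fintype.ofFinite V
  classical
  infer_instance

/-- The set of "extra" vertices that `projInv R` may activate but which are harmless. -/
def ESet (R : Set (HVert V ℓ d)) : Set (HVert V ℓ d) :=
  { p | ∃ v, HVert.orig v ∈ R ∧ ((∃ j, p = .aa v j) ∨ (∃ j, p = .bb v j) ∨
      (∃ j w, p = .gad (.av v j) w) ∨ (∃ j w, p = .gad (.bv v j) w)) }

lemma gad_mem_E_iff {R : Set (HVert V ℓ d)} {D : GadIdx V ℓ d} {w : GadVert} :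
    HVert.gad D w ∈ ESet R ↔ ∃ v j, HVert.orig v ∈ R ∧ (D = GadIdx.av v j ∨ D = GadIdx.bv v j) := by
  constructor
  · rintro ⟨v, hv, h⟩
    rcases h with ⟨j, h⟩ | ⟨j, h⟩ | ⟨j, w', h⟩ | ⟨j, w', h⟩
    · exact absurd h (by simp)
    · exact absurd h (by simp)
    · injection h with h1 h2
      exact ⟨v, j, hv, Or.inl h1⟩
    · injection h with h1 h2
      exact ⟨v, j, hv, Or.inr h1⟩
  · rintro ⟨v, j, hv, rfl | rfl⟩
    · exact ⟨v, hv, Or.inr (Or.inr (Or.inl ⟨j, w, rfl⟩))⟩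
    · exact ⟨v, hv, Or.inr (Or.inr (Or.inr ⟨j, w, rfl⟩))⟩

lemma aa_mem_E {R : Set (HVert V ℓ d)} {v : V} {j : Fin (d v)} (hv : HVert.orig v ∈ R) :
    (HVert.aa v j : HVert V ℓ d) ∈ ESet R := ⟨v, hv, Or.inl ⟨j, rfl⟩⟩

lemma bb_mem_E {R : Set (HVert V ℓ d)} {v : V} {j : Fin (d v)} (hv : HVert.orig v ∈ R) :
    (HVert.bb v j : HVert V ℓ d) ∈ ESet R := ⟨v, hv, Or.inr (Or.inl ⟨j, rfl⟩)⟩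

section Main

variable [Finite V] (G : SimpleGraph V) (τ : V → ℕ) (n : ℕ)

/-- If the tail of a gadget is active, the whole gadget becomes active. -/
lemma gadget_fire {S : Set (HVert V ℓ d)} (D : GadIdx V ℓ d)
    (h : gadTail D ∈ activeSet (graphH G ℓ d) (tauH τ n ℓ d) S) (w : GadVert) :
    HVert.gad D w ∈ activeSet (graphH G ℓ d) (tauH τ n ℓ d) S := by
  have ht : HVert.gad D .t ∈ activeSet (graphH G ℓ d) (tauH τ n ℓ d) S := by
    apply mem_activeSet_of_subset _ _ _ (T := {gadTail D})
    · rintro q rfl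
      exact ⟨(adj_tail_t G D).symm, h⟩
    · simp [tauH]
  have hb1 : HVert.gad D .b1 ∈ activeSet (graphH G ℓ d) (tauH τ n ℓ d) S := by
    apply mem_activeSet_of_subset _ _ _ (T := {HVert.gad D .t})
    · rintro q rfl
      exact ⟨(adj_t_b1 G D).symm, ht⟩
    · simp [tauH]
  have hb2 : HVert.gad D .b2 ∈ activeSet (graphH G ℓ d) (tauH τ n ℓ d) S := by
    apply mem_activeSet_of_subset _ _ _ (T := {HVert.gad D .t})
    · rintro q rfl
      exact ⟨(adj_t_b2 G D).symm, ht⟩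
    · simp [tauH]
  have hh : HVert.gad D .h ∈ activeSet (graphH G ℓ d) (tauH τ n ℓ d) S := by
    apply mem_activeSet_of_subset _ _ _ (T := {HVert.gad D .b1, HVert.gad D .b2})
    · rintro q (rfl | rfl)
      · exact ⟨adj_h_b1 G D, hb1⟩
      · exact ⟨adj_h_b2 G D, hb2⟩
    · rw [Set.ncard_pair (by simp)]
      simp [tauH]
  cases w
  · exact ht
  · exact hh
  · exact hb1
  · exact hb2

/-- Vertices of `R ⊆ Orig ∪ X ∪ Y` are never gadget-internal. -/
lemma gad_not_mem_R {R : Set (HVert V ℓ d)}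
    (hsub : R ⊆ OrigSet V ℓ d ∪ XSet V ℓ d ∪ YSet V ℓ d) (D : GadIdx V ℓ d) (w : GadVert) :
    HVert.gad D w ∉ R := by
  intro h
  rcases hsub h with (⟨v, hv⟩ | ⟨i, hi⟩) | ⟨i, hi⟩ <;> simp_all [OrigSet, XSet, YSet]

/-- If one of the `b` vertices of a gadget is activated by `R`, so is the head. -/
lemma head_of_b {R : Set (HVert V ℓ d)}
    (hsub : R ⊆ OrigSet V ℓ d ∪ XSet V ℓ d ∪ YSet V ℓ d) (D : GadIdx V ℓ d)
    (hb : HVert.gad D .b1 ∈ activeSet (graphH G ℓ d) (tauH τ n ℓ d) R ∨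
      HVert.gad D .b2 ∈ activeSet (graphH G ℓ d) (tauH τ n ℓ d) R) :
    HVert.gad D .h ∈ activeSet (graphH G ℓ d) (tauH τ n ℓ d) R := by
  -- from an active b vertex, extract an active neighbor: t or h
  have key : ∀ w : GadVert, (w = .b1 ∨ w = .b2) →
      HVert.gad D w ∈ activeSet (graphH G ℓ d) (tauH τ n ℓ d) R →
      HVert.gad D .t ∈ activeSet (graphH G ℓ d) (tauH τ n ℓ d) R ∨
      HVert.gad D .h ∈ activeSet (graphH G ℓ d) (tauH τ n ℓ d) R := by
    intro w hw hmem
    rcases mem_activeSet_elim _ _ _ hmem with hR | hcard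
    · exact absurd hR (gad_not_mem_R hsub D w)
    · have hpos : 0 < ((graphH G ℓ d).neighborSet (HVert.gad D w) ∩
          activeSet (graphH G ℓ d) (tauH τ n ℓ d) R).ncard := by
        rcases hw with rfl | rfl <;> simp [tauH] at hcard <;> omega
      have hne : ((graphH G ℓ d).neighborSet (HVert.gad D w) ∩
          activeSet (graphH G ℓ d) (tauH τ n ℓ d) R).Nonempty :=
        Set.nonempty_of_ncard_ne_zero (by omega)
      obtain ⟨q, hq1, hq2⟩ := hne
      rcases hw with rfl | rfl
      · rcases adj_b1_elim G hq1.symm with rfl | rfl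
        · exact Or.inl hq2
        · exact Or.inr hq2
      · rcases adj_b2_elim G hq1.symm with rfl | rfl
        · exact Or.inl hq2
        · exact Or.inr hq2
  have ht : HVert.gad D .t ∈ activeSet (graphH G ℓ d) (tauH τ n ℓ d) R ∨
      HVert.gad D .h ∈ activeSet (graphH G ℓ d) (tauH τ n ℓ d) R := by
    rcases hb with h | h
    · exact key .b1 (Or.inl rfl) h
    · exact key .b2 (Or.inr rfl) h
  rcases ht with ht | hh
  · -- t active: then both b's, then h
    have hb1 : HVert.gad D .b1 ∈ activeSet (graphH G ℓ d) (tauH τ n ℓ d) R := by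
      apply mem_activeSet_of_subset _ _ _ (T := {HVert.gad D .t})
      · rintro q rfl; exact ⟨(adj_t_b1 G D).symm, ht⟩
      · simp [tauH]
    have hb2 : HVert.gad D .b2 ∈ activeSet (graphH G ℓ d) (tauH τ n ℓ d) R := by
      apply mem_activeSet_of_subset _ _ _ (T := {HVert.gad D .t})
      · rintro q rfl; exact ⟨(adj_t_b2 G D).symm, ht⟩
      · simp [tauH]
    apply mem_activeSet_of_subset _ _ _ (T := {HVert.gad D .b1, HVert.gad D .b2})
    · rintro q (rfl | rfl)
      · exact ⟨adj_h_b1 G D, hb1⟩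
      · exact ⟨adj_h_b2 G D, hb2⟩
    · rw [Set.ncard_pair (by simp)]
      simp [tauH]
  · exact hh

/-- Neighbors outside `E` of vertices in `E`. -/
lemma adj_E_elim {R : Set (HVert V ℓ d)} {p q : HVert V ℓ d}
    (hpq : (graphH G ℓ d).Adj p q) (hq : q ∈ ESet R) (hp : p ∉ ESet R) :
    p ∈ R ∨ ∃ D, p = .gad D .h ∧ q = gadHead D := by
  obtain ⟨v, hvR, hcase⟩ := hq
  rcases hcase with ⟨j, rfl⟩ | ⟨j, rfl⟩ | ⟨j, w, rfl⟩ | ⟨j, w, rfl⟩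
  · rcases adj_aa_elim G hpq with rfl | ⟨i, rfl⟩
    · exact absurd (gad_mem_E_iff.2 ⟨v, j, hvR, Or.inl rfl⟩) hp
    · exact Or.inr ⟨.xa i v j, rfl, rfl⟩
  · rcases adj_bb_elim G hpq with rfl | ⟨i, rfl⟩
    · exact absurd (gad_mem_E_iff.2 ⟨v, j, hvR, Or.inr rfl⟩) hp
    · exact Or.inr ⟨.yb i v j, rfl, rfl⟩
  · cases w
    · rcases adj_t_elim G hpq with rfl | rfl | rfl
      · exact absurd (gad_mem_E_iff.2 ⟨v, j, hvR, Or.inl rfl⟩) hp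
      · exact absurd (gad_mem_E_iff.2 ⟨v, j, hvR, Or.inl rfl⟩) hp
      · exact absurd (aa_mem_E hvR) hp
    · rcases adj_h_elim G hpq with rfl | rfl | rfl
      · exact absurd (gad_mem_E_iff.2 ⟨v, j, hvR, Or.inl rfl⟩) hp
      · exact absurd (gad_mem_E_iff.2 ⟨v, j, hvR, Or.inl rfl⟩) hp
      · exact Or.inl hvR
    · rcases adj_b1_elim G hpq with rfl | rfl <;>
        exact absurd (gad_mem_E_iff.2 ⟨v, j, hvR, Or.inl rfl⟩) hp
    · rcases adj_b2_elim G hpq with rfl | rfl <;>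
        exact absurd (gad_mem_E_iff.2 ⟨v, j, hvR, Or.inl rfl⟩) hp
  · cases w
    · rcases adj_t_elim G hpq with rfl | rfl | rfl
      · exact absurd (gad_mem_E_iff.2 ⟨v, j, hvR, Or.inr rfl⟩) hp
      · exact absurd (gad_mem_E_iff.2 ⟨v, j, hvR, Or.inr rfl⟩) hp
      · exact absurd (bb_mem_E hvR) hp
    · rcases adj_h_elim G hpq with rfl | rfl | rfl
      · exact absurd (gad_mem_E_iff.2 ⟨v, j, hvR, Or.inr rfl⟩) hp
      · exact absurd (gad_mem_E_iff.2 ⟨v, j, hvR, Or.inr rfl⟩) hp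
      · exact Or.inl hvR
    · rcases adj_b1_elim G hpq with rfl | rfl <;>
        exact absurd (gad_mem_E_iff.2 ⟨v, j, hvR, Or.inr rfl⟩) hp
    · rcases adj_b2_elim G hpq with rfl | rfl <;>
        exact absurd (gad_mem_E_iff.2 ⟨v, j, hvR, Or.inr rfl⟩) hp

end Main

lemma main_lemma {V : Type*} [Finite V] {ℓ : ℕ} {d : V → ℕ} (G : SimpleGraph V) (τ : V → ℕ)
    (n : ℕ) (R : Set (HVert V ℓ d))
    (hsub : R ⊆ OrigSet V ℓ d ∪ XSet V ℓ d ∪ YSet V ℓ d)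
    (hPR : IsTargetSet (graphH G ℓ d) (tauH τ n ℓ d) (projInv ℓ d R)) :
    IsTargetSet (graphH G ℓ d) (tauH τ n ℓ d) R := by
  -- Step 1: the activation process from `projInv R` stays within `𝒜(R) ∪ E`.
  have hinv : ∀ i, activeAt (graphH G ℓ d) (tauH τ n ℓ d) (projInv ℓ d R) i ⊆
      activeSet (graphH G ℓ d) (tauH τ n ℓ d) R ∪ ESet R := by
    intro i
    induction i with
    | zero =>
      rintro p ((hp | ⟨v, j, hv, rfl⟩) | ⟨v, j, hv, rfl⟩)
      · exact Or.inl (subset_activeSet _ _ _ hp)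
      · exact Or.inr (aa_mem_E hv)
      · exact Or.inr (bb_mem_E hv)
    | succ k ih =>
      rintro p (hp | hp)
      · exact ih hp
      · by_cases hpE : p ∈ ESet R
        · exact Or.inr hpE
        left
        by_cases hall : ∀ q ∈ (graphH G ℓ d).neighborSet p ∩
            activeAt (graphH G ℓ d) (tauH τ n ℓ d) (projInv ℓ d R) k,
            q ∈ activeSet (graphH G ℓ d) (tauH τ n ℓ d) R
        · exact mem_activeSet_of_threshold _ _ _ (le_trans hp
            (Set.ncard_le_ncard (fun q hq => ⟨hq.1, hall q hq⟩) (Set.toFinite _)))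
        · push_neg at hall
          obtain ⟨q, hqmem, hqA⟩ := hall
          have hqE : q ∈ ESet R := (ih hqmem.2).resolve_left hqA
          rcases adj_E_elim G hqmem.1 hqE hpE with hpR | ⟨D, rfl, rfl⟩
          · exact subset_activeSet _ _ _ hpR
          · -- `p` is the head of a gadget whose (E-)head vertex fed it
            have hp2 : (2 : ℕ) ≤ ((graphH G ℓ d).neighborSet (HVert.gad D .h) ∩
                activeAt (graphH G ℓ d) (tauH τ n ℓ d) (projInv ℓ d R) k).ncard := hp
            have hb : HVert.gad D .b1 ∈ activeSet (graphH G ℓ d) (tauH τ n ℓ d) R ∨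
                HVert.gad D .b2 ∈ activeSet (graphH G ℓ d) (tauH τ n ℓ d) R := by
              by_contra hc
              push_neg at hc
              have hsubN : (graphH G ℓ d).neighborSet (HVert.gad D .h) ∩
                  activeAt (graphH G ℓ d) (tauH τ n ℓ d) (projInv ℓ d R) k ⊆ {gadHead D} := by
                rintro r ⟨hr1, hr2⟩
                rcases adj_h_elim G hr1.symm with rfl | rfl | rfl
                · rcases ih hr2 with h | h
                  · exact absurd h hc.1
                  · obtain ⟨v, j, hv, hD | hD⟩ := gad_mem_E_iff.1 h <;> subst hD <;>
                      exact absurd (gad_mem_E_iff.2 ⟨v, j, hv, by simp⟩) hpE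
                · rcases ih hr2 with h | h
                  · exact absurd h hc.2
                  · obtain ⟨v, j, hv, hD | hD⟩ := gad_mem_E_iff.1 h <;> subst hD <;>
                      exact absurd (gad_mem_E_iff.2 ⟨v, j, hv, by simp⟩) hpE
                · rfl
              have h1 : ((graphH G ℓ d).neighborSet (HVert.gad D .h) ∩
                  activeAt (graphH G ℓ d) (tauH τ n ℓ d) (projInv ℓ d R) k).ncard ≤ 1 := by
                calc _ ≤ ({gadHead D} : Set (HVert V ℓ d)).ncard :=
                      Set.ncard_le_ncard hsubN (Set.toFinite _)
                  _ = 1 := Set.ncard_singleton _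
              omega
            exact head_of_b G τ n hsub D hb
  -- Step 2: every vertex is in `𝒜(R) ∪ E`.
  have hcover : ∀ p : HVert V ℓ d, p ∈ activeSet (graphH G ℓ d) (tauH τ n ℓ d) R ∪ ESet R := by
    intro p
    have hp : p ∈ activeSet (graphH G ℓ d) (tauH τ n ℓ d) (projInv ℓ d R) := by
      rw [hPR]; trivial
    obtain ⟨i, hi⟩ := Set.mem_iUnion.1 hp
    exact hinv i hi
  -- Step 3: heads of the `xa` and `yb` gadgets are in `𝒜(R)`.
  have hxahead : ∀ (i : Fin ℓ) (v : V) (j : Fin (d v)),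
      (HVert.gad (GadIdx.xa i v j) GadVert.h : HVert V ℓ d) ∈
        activeSet (graphH G ℓ d) (tauH τ n ℓ d) R := by
    intro i v j
    rcases hcover _ with h | h
    · exact h
    · obtain ⟨v', j', _, hD | hD⟩ := gad_mem_E_iff.1 h <;> exact absurd hD (by simp)
  have hybhead : ∀ (i : Fin ℓ) (v : V) (j : Fin (d v)),
      (HVert.gad (GadIdx.yb i v j) GadVert.h : HVert V ℓ d) ∈
        activeSet (graphH G ℓ d) (tauH τ n ℓ d) R := by
    intro i v j
    rcases hcover _ with h | h
    · exact h
    · obtain ⟨v', j', _, hD | hD⟩ := gad_mem_E_iff.1 h <;> exact absurd hD (by simp)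
  -- Step 4: all of `A` and `B` is in `𝒜(R)`.
  have haa : ∀ (v : V) (j : Fin (d v)),
      (HVert.aa v j : HVert V ℓ d) ∈ activeSet (graphH G ℓ d) (tauH τ n ℓ d) R := by
    intro v j
    apply mem_activeSet_of_subset _ _ _
      (T := Set.range fun i : Fin ℓ => (HVert.gad (GadIdx.xa i v j) GadVert.h : HVert V ℓ d))
    · rintro q ⟨i, rfl⟩
      exact ⟨adj_head_h G (GadIdx.xa i v j), hxahead i v j⟩
    · have hinj : Function.Injective
          (fun i : Fin ℓ => (HVert.gad (GadIdx.xa i v j) GadVert.h : HVert V ℓ d)) := by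
        intro a b hab
        simpa using hab
      show ℓ ≤ _
      rw [← Set.image_univ, Set.ncard_image_of_injective _ hinj, Set.ncard_univ,
        Nat.card_eq_fintype_card, Fintype.card_fin]
  have hbb : ∀ (v : V) (j : Fin (d v)),
      (HVert.bb v j : HVert V ℓ d) ∈ activeSet (graphH G ℓ d) (tauH τ n ℓ d) R := by
    intro v j
    apply mem_activeSet_of_subset _ _ _
      (T := Set.range fun i : Fin ℓ => (HVert.gad (GadIdx.yb i v j) GadVert.h : HVert V ℓ d))
    · rintro q ⟨i, rfl⟩
      exact ⟨adj_head_h G (GadIdx.yb i v j), hybhead i v j⟩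
    · have hinj : Function.Injective
          (fun i : Fin ℓ => (HVert.gad (GadIdx.yb i v j) GadVert.h : HVert V ℓ d)) := by
        intro a b hab
        simpa using hab
      show ℓ ≤ _
      rw [← Set.image_univ, Set.ncard_image_of_injective _ hinj, Set.ncard_univ,
        Nat.card_eq_fintype_card, Fintype.card_fin]
  -- Step 5: all of `E` is in `𝒜(R)`.
  have hE : ESet R ⊆ activeSet (graphH G ℓ d) (tauH τ n ℓ d) R := by
    rintro p ⟨v, hvR, ⟨j, rfl⟩ | ⟨j, rfl⟩ | ⟨j, w, rfl⟩ | ⟨j, w, rfl⟩⟩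
    · exact haa v j
    · exact hbb v j
    · exact gadget_fire G τ n (GadIdx.av v j) (haa v j) w
    · exact gadget_fire G τ n (GadIdx.bv v j) (hbb v j) w
  exact Set.eq_univ_of_forall fun p => (hcover p).elim id fun h => hE h

end TSS

open TSS in
/-- For `R ⊆ V ∪ X ∪ Y`, if `proj⁻¹(R)` is a target set for `H`, then so is `R`. -/
theorem stmt12 {V : Type*} [Fintype V] (G : SimpleGraph V) [DecidableRel G.Adj] (τ : V → ℕ)
    (ℓ : ℕ) (hℓ : 1 ≤ ℓ) (hiso : ∀ v : V, 0 < G.degree v) (hτ : ∀ v : V, τ v ≤ G.degree v)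
    (R : Set (HVert V ℓ (fun v => G.degree v)))
    (hsub : R ⊆ OrigSet V ℓ (fun v => G.degree v) ∪ XSet V ℓ (fun v => G.degree v) ∪ YSet V ℓ (fun v => G.degree v)) :
    IsTargetSet (graphH G ℓ (fun v => G.degree v)) (tauH τ (Fintype.card V) ℓ (fun v => G.degree v))
        (projInv ℓ (fun v => G.degree v) R) →
      IsTargetSet (graphH G ℓ (fun v => G.degree v)) (tauH τ (Fintype.card V) ℓ (fun v => G.degree v)) R := by
  exact fun h => main_lemma G τ (Fintype.card V) R hsub h
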